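/- Let n ≥ 1, let a ∈ ℝ with a ≠ 0, let u : ℝ → ℝ be (n−1)-times differentiable, let x : ℝ → ℝ be differentiable, and let c := r_n/a^n where r_n := a^n·x(0) + Σ_{k=0}^{n−1} a^(n−1−k)·u^(k)(0). If x'(t) = a·(x(t) − c) + u(t) for all t ∈ ℝ, then x is n-times differentiable at 0 and x^(n)(0) = 0. -/

import Mathlib

/-- Equilibrium case of the order-`n` LIQSS method: if `a ≠ 0`,
`c = r_n/a^n` with `r_n = a^n·x(0) + Σ_{k<n} a^(n−1−k)·u^(k)(0)`, and
`x' = a·(x − c) + u`, then `x` is `n`-times differentiable at `0` and `x^(n)(0) = 0`. -/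
theorem liqss_equilibrium (n : ℕ) (hn : 1 ≤ n) (a : ℝ) (ha : a ≠ 0) (u x : ℝ → ℝ)
    (hu : ContDiff ℝ (n - 1 : ℕ) u) (hx : Differentiable ℝ x) (c : ℝ)
    (hc : c = (a ^ n * x 0 + ∑ k ∈ Finset.range n, a ^ (n - 1 - k) * iteratedDeriv k u 0) / a ^ n)
    (hode : ∀ t : ℝ, HasDerivAt x (a * (x t - c) + u t) t) :
    ContDiffAt ℝ (n : ℕ) x 0 ∧ iteratedDeriv n x 0 = 0 := by
  have hderiv : deriv x = fun t => a * (x t - c) + u t := funext fun t => (hode t).deriv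
  -- x is C^m for every m ≤ n
  have hC : ∀ m : ℕ, m ≤ n → ContDiff ℝ (m : ℕ) x := by
    intro m hm
    induction m with
    | zero => exact contDiff_zero.mpr hx.continuous
    | succ m ih =>
      have hxm : ContDiff ℝ (m : ℕ) x := ih (le_trans (Nat.le_succ m) hm)
      have hum : ContDiff ℝ (m : ℕ) u := by
        refine hu.of_le ?_
        exact_mod_cast Nat.le_sub_one_of_lt hm
      have : ContDiff ℝ ((m : WithTop ℕ∞) + 1) x := by
        rw [contDiff_succ_iff_deriv]
        refine ⟨hx, by simp, ?_⟩
        rw [hderiv]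
        exact (contDiff_const.mul (hxm.sub contDiff_const)).add hum
      exact_mod_cast this
  -- formula for iterated derivatives
  have hfor : ∀ m : ℕ, m + 1 ≤ n → ∀ t : ℝ, iteratedDeriv (m + 1) x t =
      a ^ (m + 1) * (x t - c) +
        ∑ k ∈ Finset.range (m + 1), a ^ (m - k) * iteratedDeriv k u t := by
    intro m
    induction m with
    | zero =>
      intro _ t
      simp [iteratedDeriv_one, hderiv]
    | succ m ih =>
      intro hm t
      have ihm := ih (by omega)
      have hfun : iteratedDeriv (m + 1) x = fun t => a ^ (m + 1) * (x t - c) +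
          ∑ k ∈ Finset.range (m + 1), a ^ (m - k) * iteratedDeriv k u t :=
        funext fun t => ihm t
      rw [iteratedDeriv_succ, hfun]
      have h1 : HasDerivAt (fun t => a ^ (m + 1) * (x t - c))
          (a ^ (m + 1) * (a * (x t - c) + u t)) t :=
        ((hode t).sub_const c).const_mul _
      have h2 : ∀ k ∈ Finset.range (m + 1),
          HasDerivAt (fun t => a ^ (m - k) * iteratedDeriv k u t)
            (a ^ (m - k) * iteratedDeriv (k + 1) u t) t := by
        intro k hk
        rw [Finset.mem_range] at hk
        have hdk : Differentiable ℝ (iteratedDeriv k u) := by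
          refine hu.differentiable_iteratedDeriv k ?_
          exact_mod_cast (by omega : k < n - 1)
        have := (hdk.differentiableAt (x := t)).hasDerivAt
        rw [show deriv (iteratedDeriv k u) t = iteratedDeriv (k + 1) u t by
          rw [iteratedDeriv_succ]] at this
        exact this.const_mul _
      have hsum : HasDerivAt (fun t => a ^ (m + 1) * (x t - c) +
          ∑ k ∈ Finset.range (m + 1), a ^ (m - k) * iteratedDeriv k u t)
          (a ^ (m + 1) * (a * (x t - c) + u t) +
            ∑ k ∈ Finset.range (m + 1), a ^ (m - k) * iteratedDeriv (k + 1) u t) t :=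
        h1.add (HasDerivAt.fun_sum h2)
      rw [hsum.deriv]
      rw [Finset.sum_range_succ' (fun k => a ^ (m + 1 - k) * iteratedDeriv k u t)]
      simp only [Nat.succ_sub_succ_eq_sub, Nat.sub_zero, iteratedDeriv_zero, pow_succ]
      ring
  refine ⟨(hC n le_rfl).contDiffAt, ?_⟩
  have h := hfor (n - 1) (by omega) 0
  rw [show n - 1 + 1 = n by omega] at h
  rw [h, hc]
  have hpow : (a : ℝ) ^ n ≠ 0 := pow_ne_zero _ ha
  field_simp
  ring
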